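/- Let T : PSym(3) → Sym(3) be continuous, satisfy T(1) = 0 and the law of superposition. Then for every U ∈ PSym(3) and every real number r one has T(Uʳ) = r · T(U), where Uʳ denotes the real matrix power of U (obtained by raising the eigenvalues of U to the power r in a spectral decomposition). -/

import Mathlib

open Matrix

/-- The real matrix power `Uʳ` of a symmetric matrix, obtained by raising the eigenvalues
to the power `r` in a spectral decomposition (junk value `0` on non-Hermitian input). -/
noncomputable def matRpow (A : Matrix (Fin 3) (Fin 3) ℝ) (r : ℝ) :
    Matrix (Fin 3) (Fin 3) ℝ :=
  if hA : A.IsHermitian then hA.cfc (fun t => t ^ r) else 0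

section Aux

variable {A : Matrix (Fin 3) (Fin 3) ℝ} (hA : A.IsHermitian)

private lemma mcfc_congr (f g : ℝ → ℝ)
    (h : ∀ i, f (hA.eigenvalues i) = g (hA.eigenvalues i)) :
    hA.cfc f = hA.cfc g := by
  have : (RCLike.ofReal ∘ f ∘ hA.eigenvalues : Fin 3 → ℝ)
      = RCLike.ofReal ∘ g ∘ hA.eigenvalues := funext fun i => by simp [h i]
  unfold Matrix.IsHermitian.cfc
  rw [this]

private lemma mcfc_mul (f g : ℝ → ℝ) :
    hA.cfc f * hA.cfc g = hA.cfc (fun t => f t * g t) := by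
  have h1 : (star hA.eigenvectorUnitary : Matrix (Fin 3) (Fin 3) ℝ) *
      (hA.eigenvectorUnitary : Matrix (Fin 3) (Fin 3) ℝ) = 1 :=
    Unitary.star_mul_self_of_mem (SetLike.coe_mem _)
  unfold Matrix.IsHermitian.cfc
  simp only [Unitary.conjStarAlgAut_apply]
  have hre : ∀ a b c d e f : Matrix (Fin 3) (Fin 3) ℝ,
      (a * b * c) * (d * e * f) = a * (b * (c * d) * e) * f := by
    intros; simp only [mul_assoc]
  rw [hre, h1, mul_one, diagonal_mul_diagonal]
  congr 2

private lemma mcfc_id : hA.cfc id = A := by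
  conv_rhs => rw [hA.spectral_theorem]
  rfl

private lemma mcfc_one : hA.cfc (fun _ => 1) = 1 := by
  unfold Matrix.IsHermitian.cfc
  have : diagonal (RCLike.ofReal ∘ (fun _ : ℝ => (1:ℝ)) ∘ hA.eigenvalues)
      = (1 : Matrix (Fin 3) (Fin 3) ℝ) := by
    simp [Function.comp_def]
  rw [this, Unitary.conjStarAlgAut_apply, mul_one]
  exact Unitary.mul_star_self_of_mem (SetLike.coe_mem _)

private lemma mcfc_posDef (f : ℝ → ℝ) (h : ∀ i, 0 < f (hA.eigenvalues i)) :
    (hA.cfc f).PosDef := by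
  set V : Matrix (Fin 3) (Fin 3) ℝ := (hA.eigenvectorUnitary : Matrix (Fin 3) (Fin 3) ℝ)
  have hVs : star V * V = 1 := Unitary.star_mul_self_of_mem (SetLike.coe_mem _)
  have hherm : (hA.cfc f).IsHermitian := by
    have : IsSelfAdjoint (hA.cfc f) := by
      rw [← hA.cfc_eq]
      exact cfc_predicate _ _
    exact this
  refine PosDef.of_dotProduct_mulVec_pos hherm fun x hx => ?_
  have hDpos : (diagonal (RCLike.ofReal ∘ f ∘ hA.eigenvalues) :
      Matrix (Fin 3) (Fin 3) ℝ).PosDef :=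
    posDef_diagonal_iff.mpr fun i => by simpa using h i
  have hy : (star V) *ᵥ x ≠ 0 := by
    intro h0
    apply hx
    have := congrArg (fun v => V *ᵥ v) h0
    have hVs2 : V * star V = 1 := Unitary.mul_star_self_of_mem (SetLike.coe_mem _)
    simpa [Matrix.mulVec_mulVec, ← Matrix.mul_assoc,
      hVs2] using this
  have key : star x ⬝ᵥ (hA.cfc f) *ᵥ x
      = star ((star V) *ᵥ x) ⬝ᵥ
        (diagonal (RCLike.ofReal ∘ f ∘ hA.eigenvalues)) *ᵥ ((star V) *ᵥ x) := by
    unfold Matrix.IsHermitian.cfc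
    rw [Unitary.conjStarAlgAut_apply]
    rw [star_mulVec, ← Matrix.mulVec_mulVec, ← Matrix.mulVec_mulVec,
      Matrix.dotProduct_mulVec (star x)]
    congr 1
  rw [key]
  exact hDpos.dotProduct_mulVec_pos hy

end Aux

private lemma matRpow_eq {U : Matrix (Fin 3) (Fin 3) ℝ} (hU : U.IsHermitian) (r : ℝ) :
    matRpow U r = hU.cfc (fun t => t ^ r) := by
  rw [matRpow, dif_pos hU]

private lemma matRpow_posDef {U : Matrix (Fin 3) (Fin 3) ℝ} (hU : U.PosDef) (r : ℝ) :
    (matRpow U r).PosDef := by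
  rw [matRpow_eq hU.1]
  exact mcfc_posDef hU.1 _ fun i => Real.rpow_pos_of_pos (hU.eigenvalues_pos i) r

private lemma matRpow_add {U : Matrix (Fin 3) (Fin 3) ℝ} (hU : U.PosDef) (r s : ℝ) :
    matRpow U (r + s) = matRpow U r * matRpow U s := by
  rw [matRpow_eq hU.1, matRpow_eq hU.1, matRpow_eq hU.1, mcfc_mul hU.1]
  exact mcfc_congr hU.1 _ _ fun i => Real.rpow_add (hU.eigenvalues_pos i) r s

private lemma matRpow_one' {U : Matrix (Fin 3) (Fin 3) ℝ} (hU : U.IsHermitian) :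
    matRpow U 1 = U := by
  rw [matRpow_eq hU]
  have : hU.cfc (fun t => t ^ (1:ℝ)) = hU.cfc id :=
    mcfc_congr hU _ _ fun i => Real.rpow_one _
  rw [this, mcfc_id]

private lemma matRpow_continuous {U : Matrix (Fin 3) (Fin 3) ℝ} (hU : U.PosDef) :
    Continuous (fun r : ℝ => matRpow U r) := by
  have : (fun r : ℝ => matRpow U r)
      = fun r => (hU.1.eigenvectorUnitary : Matrix (Fin 3) (Fin 3) ℝ) *
          diagonal (RCLike.ofReal ∘ (fun t => t ^ r) ∘ hU.1.eigenvalues) *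
          (star hU.1.eigenvectorUnitary : Matrix (Fin 3) (Fin 3) ℝ) := by
    funext r
    rw [matRpow_eq hU.1]
    rfl
  rw [this]
  refine ((Continuous.matrix_mul continuous_const ?_).matrix_mul continuous_const)
  apply Continuous.matrix_diagonal
  apply continuous_pi
  intro i
  have hpos := hU.eigenvalues_pos i
  have : Continuous fun r : ℝ => (hU.1.eigenvalues i) ^ r := by
    rw [continuous_iff_continuousAt]
    intro b
    exact Real.continuousAt_const_rpow hpos.ne'
  simpa [Function.comp_def] using this

/-- If `T : PSym(3) → Sym(3)` is continuous, satisfies `T(1) = 0` and the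
law of superposition, then `T(Uʳ) = r • T(U)` for every positive definite `U` and every
real `r`, where `Uʳ` is the real matrix power of `U`. -/
theorem stress_of_real_power
    (T : Matrix (Fin 3) (Fin 3) ℝ → Matrix (Fin 3) (Fin 3) ℝ)
    (hSym : ∀ U : Matrix (Fin 3) (Fin 3) ℝ, U.PosDef → (T U).IsHermitian)
    (hCont : ContinuousOn T {U : Matrix (Fin 3) (Fin 3) ℝ | U.PosDef})
    (hOne : T 1 = 0)
    (hSup : ∀ U₁ U₂ : Matrix (Fin 3) (Fin 3) ℝ, U₁.PosDef → U₂.PosDef →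
      U₁ * U₂ = U₂ * U₁ → T (U₁ * U₂) = T U₁ + T U₂) :
    ∀ U : Matrix (Fin 3) (Fin 3) ℝ, U.PosDef → ∀ r : ℝ,
      T (matRpow U r) = r • T U := by
  intro U hU r
  have hcomm : ∀ a b : ℝ, matRpow U a * matRpow U b = matRpow U b * matRpow U a := by
    intro a b
    rw [← matRpow_add hU, ← matRpow_add hU, add_comm]
  have hadd : ∀ a b : ℝ, T (matRpow U (a + b)) = T (matRpow U a) + T (matRpow U b) := by
    intro a b
    rw [matRpow_add hU]
    exact hSup _ _ (matRpow_posDef hU a) (matRpow_posDef hU b) (hcomm a b)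
  let G : ℝ →+ Matrix (Fin 3) (Fin 3) ℝ :=
    AddMonoidHom.mk' (fun a => T (matRpow U a)) hadd
  have hGcont : Continuous G := by
    exact hCont.comp_continuous (matRpow_continuous hU) (fun a => matRpow_posDef hU a)
  have := map_real_smul G hGcont r 1
  simpa [G, matRpow_one' hU.1] using this
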